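/- Let ρ > 1 and let w ∈ ℂ satisfy |w − (m + n·i)| > ρ·|w| for every pair of integers (m,n) ≠ (0,0). Then |Re w| < 1/(1 + ρ) and |Im w| < 1/(1 + ρ). Consequently, the area (2-dimensional Lebesgue measure) of the Q cell Q_□(ρ) of the origin in the unit square lattice is at most 4/(1 + ρ)². -/

import Mathlib

open MeasureTheory

lemma aux13 (ρ x y : ℝ) (hρ : 1 < ρ) (h : ρ ^ 2 * (x ^ 2 + y ^ 2) < (x - 1) ^ 2 + y ^ 2) :
    x < 1 / (1 + ρ) := by
  have h1 : (0:ℝ) < 1 + ρ := by linarith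
  by_contra hx
  push_neg at hx
  rw [div_le_iff₀ h1] at hx
  have hx0 : 0 ≤ x := by nlinarith
  have f1 : 0 ≤ ρ * x - x + 1 := by nlinarith
  have f2 : 0 ≤ ρ * x + x - 1 := by nlinarith
  nlinarith [sq_nonneg y, mul_nonneg f1 f2, mul_nonneg (mul_nonneg hx0 hx0) (by nlinarith : (0:ℝ) ≤ ρ^2 - 1), mul_nonneg (sq_nonneg y) (by nlinarith : (0:ℝ) ≤ ρ^2 - 1)]

/-- In the unit square lattice, every point of the Q cell of the origin satisfies
`|Re w| < 1/(1+ρ)` and `|Im w| < 1/(1+ρ)`; consequently the area of the Q cell is at most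
`4/(1+ρ)²`. -/
theorem stmt_13 (ρ : ℝ) (hρ : 1 < ρ) :
    (∀ w : ℂ,
        (∀ m n : ℤ, (m, n) ≠ (0, 0) →
          ‖w - ((m : ℂ) + (n : ℂ) * Complex.I)‖ > ρ * ‖w‖) →
        |w.re| < 1 / (1 + ρ) ∧ |w.im| < 1 / (1 + ρ)) ∧
      volume {w : ℂ | ∀ m n : ℤ, (m, n) ≠ (0, 0) →
          ‖w - ((m : ℂ) + (n : ℂ) * Complex.I)‖ > ρ * ‖w‖} ≤
        ENNReal.ofReal (4 / (1 + ρ) ^ 2) := by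
  have h1 : (0:ℝ) < 1 + ρ := by linarith
  have key : ∀ w : ℂ,
      (∀ m n : ℤ, (m, n) ≠ (0, 0) →
        ‖w - ((m : ℂ) + (n : ℂ) * Complex.I)‖ > ρ * ‖w‖) →
      |w.re| < 1 / (1 + ρ) ∧ |w.im| < 1 / (1 + ρ) := by
    intro w hw
    have sq : ∀ m n : ℤ, (m, n) ≠ (0, 0) →
        ρ ^ 2 * (w.re ^ 2 + w.im ^ 2) <
          (w.re - ((m:ℝ)))^2 + (w.im - (n:ℝ))^2 := by
      intro m n hmn
      have h := hw m n hmn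
      have h0 : 0 ≤ ρ * ‖w‖ :=
        mul_nonneg (by linarith) (norm_nonneg _)
      have h2 : (ρ * ‖w‖) ^ 2 < (‖w - ((m : ℂ) + (n : ℂ) * Complex.I)‖) ^ 2 :=
        pow_lt_pow_left₀ h h0 two_ne_zero
      rw [mul_pow, Complex.sq_norm, Complex.sq_norm] at h2
      simpa [Complex.normSq_apply, Complex.sub_re, Complex.sub_im, Complex.add_re,
        Complex.add_im, Complex.mul_re, Complex.mul_im, sq] using h2
    constructor
    · rw [abs_lt]
      constructor
      · have := sq (-1) 0 (by decide)
        have := aux13 ρ (-w.re) w.im hρ (by push_cast at this ⊢; nlinarith [this])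
        linarith
      · have := sq 1 0 (by decide)
        exact aux13 ρ w.re w.im hρ (by push_cast at this ⊢; nlinarith [this])
    · rw [abs_lt]
      constructor
      · have := sq 0 (-1) (by decide)
        have := aux13 ρ (-w.im) w.re hρ (by push_cast at this ⊢; nlinarith [this])
        linarith
      · have := sq 0 1 (by decide)
        exact aux13 ρ w.im w.re hρ (by push_cast at this ⊢; nlinarith [this])
  refine ⟨key, ?_⟩
  set a : ℝ := 1 / (1 + ρ) with ha
  have hsub : {w : ℂ | ∀ m n : ℤ, (m, n) ≠ (0, 0) →
      ‖w - ((m : ℂ) + (n : ℂ) * Complex.I)‖ > ρ * ‖w‖} ⊆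
      Complex.measurableEquivRealProd ⁻¹' (Set.Ioo (-a) a ×ˢ Set.Ioo (-a) a) := by
    intro w hw
    obtain ⟨h1', h2'⟩ := key w hw
    rw [abs_lt] at h1' h2'
    exact ⟨⟨h1'.1, h1'.2⟩, ⟨h2'.1, h2'.2⟩⟩
  calc volume {w : ℂ | ∀ m n : ℤ, (m, n) ≠ (0, 0) →
          ‖w - ((m : ℂ) + (n : ℂ) * Complex.I)‖ > ρ * ‖w‖}
      ≤ volume (Complex.measurableEquivRealProd ⁻¹' (Set.Ioo (-a) a ×ˢ Set.Ioo (-a) a)) :=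
        measure_mono hsub
    _ = volume ((Set.Ioo (-a) a) ×ˢ (Set.Ioo (-a) a)) := by
        rw [Complex.volume_preserving_equiv_real_prod.measure_preimage
          ((measurableSet_Ioo.prod measurableSet_Ioo).nullMeasurableSet)]
    _ ≤ ENNReal.ofReal (4 / (1 + ρ) ^ 2) := by
        have hapos : 0 < a := by rw [ha]; positivity
        rw [Measure.volume_eq_prod, Measure.prod_prod, Real.volume_Ioo,
          ← ENNReal.ofReal_mul (by linarith)]
        apply ENNReal.ofReal_le_ofReal
        apply le_of_eq
        rw [ha]
        field_simp
        ring
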